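/- Let u ∈ C^{1,α}(Ω) (Euclidean Hölder class) and x0 ∈ Ω. Define P¹_{x0}u(x) = u(x0) + e₁(x)·X̃₁u(x0,0) + e₂(x)·X̃₂u(x0,0), where e₁(x)=(x−x0)₁ and ε e₂(x) = (x−x0)₂ − (x−x0)₁ u(x0). Then there exist constants ε₀, C > 0 and a neighborhood U of x0 depending only on the C^{1,α} norm of u, such that for all x ∈ U and all 0 < ε < ε₀, |u(x) − P¹_{x0}u(x)| ≤ C d_{x0,ε}(x,x0)^{1+α}, where d_{x0,ε} is the Riemannian control distance associated to the frozen vector fields {X_{1,x0}, X_{2,x0}, X_{3,x0}}. -/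

import Mathlib

noncomputable section

def ctrlDist (V1 V2 V3 : ℝ × ℝ × ℝ → ℝ × ℝ × ℝ) (p q : ℝ × ℝ × ℝ) : ℝ :=
  sInf {L : ℝ | 0 ≤ L ∧ ∃ γ : ℝ → ℝ × ℝ × ℝ, ∃ a : ℝ → ℝ × ℝ × ℝ,
    γ 0 = p ∧ γ 1 = q ∧
    ∀ t ∈ Set.Icc (0 : ℝ) 1,
      HasDerivAt γ ((a t).1 • V1 (γ t) + (a t).2.1 • V2 (γ t) + (a t).2.2 • V3 (γ t)) t ∧
      ‖a t‖ ≤ L}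

def P1 (u : ℝ × ℝ → ℝ) (Du : ℝ × ℝ → (ℝ × ℝ) →L[ℝ] ℝ) (ε : ℝ) (x0 x : ℝ × ℝ) : ℝ :=
  u x0 + (x.1 - x0.1) * (Du x0 (1, 0) + u x0 * Du x0 (0, 1))
    + ((x.2 - x0.2) - (x.1 - x0.1) * u x0) / ε * (ε * Du x0 (0, 1))

section aux

variable {u : ℝ × ℝ → ℝ} {Du : ℝ × ℝ → (ℝ × ℝ) →L[ℝ] ℝ} {ε M : ℝ} {x0 : ℝ × ℝ}

lemma P1_eq (hε : ε ≠ 0) (p : ℝ × ℝ) :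
    P1 u Du ε x0 p = u x0 + (p.1 - x0.1) * (Du x0 (1, 0) + u x0 * Du x0 (0, 1))
      + ((p.2 - x0.2) - (p.1 - x0.1) * u x0) * Du x0 (0, 1) := by
  unfold P1; field_simp

lemma P1_abs_le (hε : ε ≠ 0) (hM : |u x0| + ‖Du x0‖ ≤ M) (p : ℝ × ℝ) :
    |P1 u Du ε x0 p| ≤ M + (M + 2*M^2) * (|p.1 - x0.1| + |p.2 - x0.2|) := by
  have hM0 : 0 ≤ M := le_trans (by positivity) hM
  have h0 : |u x0| ≤ M := le_trans (le_add_of_nonneg_right (norm_nonneg _)) hM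
  have hop : ‖Du x0‖ ≤ M := le_trans (le_add_of_nonneg_left (abs_nonneg _)) hM
  have h1 : |Du x0 (1, 0)| ≤ M := by
    have := (Du x0).le_opNorm ((1 : ℝ), (0 : ℝ))
    have hn : ‖((1 : ℝ), (0 : ℝ))‖ = 1 := by simp [Prod.norm_def]
    rw [hn, mul_one] at this
    exact le_trans this hop
  have h2 : |Du x0 (0, 1)| ≤ M := by
    have := (Du x0).le_opNorm ((0 : ℝ), (1 : ℝ))
    have hn : ‖((0 : ℝ), (1 : ℝ))‖ = 1 := by simp [Prod.norm_def]
    rw [hn, mul_one] at this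
    exact le_trans this hop
  rw [P1_eq hε]
  have e1 : |(p.1 - x0.1) * (Du x0 (1, 0) + u x0 * Du x0 (0, 1))|
      ≤ |p.1 - x0.1| * (M + M * M) := by
    rw [abs_mul]
    gcongr
    calc |Du x0 (1, 0) + u x0 * Du x0 (0, 1)| ≤ |Du x0 (1, 0)| + |u x0 * Du x0 (0, 1)| :=
        abs_add_le _ _
      _ ≤ M + M * M := by rw [abs_mul]; gcongr
  have e2 : |((p.2 - x0.2) - (p.1 - x0.1) * u x0) * Du x0 (0, 1)|
      ≤ (|p.2 - x0.2| + |p.1 - x0.1| * M) * M := by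
    rw [abs_mul]
    have h3 : |(p.2 - x0.2) - (p.1 - x0.1) * u x0| ≤ |p.2 - x0.2| + |p.1 - x0.1| * M := by
      calc |(p.2 - x0.2) - (p.1 - x0.1) * u x0| ≤ |p.2 - x0.2| + |(p.1 - x0.1) * u x0| :=
          abs_sub _ _
        _ ≤ |p.2 - x0.2| + |p.1 - x0.1| * M := by rw [abs_mul]; gcongr
    exact mul_le_mul h3 h2 (abs_nonneg _) (by positivity)
  calc |u x0 + (p.1 - x0.1) * (Du x0 (1, 0) + u x0 * Du x0 (0, 1))
        + ((p.2 - x0.2) - (p.1 - x0.1) * u x0) * Du x0 (0, 1)|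
      ≤ |u x0| + |(p.1 - x0.1) * (Du x0 (1, 0) + u x0 * Du x0 (0, 1))|
        + |((p.2 - x0.2) - (p.1 - x0.1) * u x0) * Du x0 (0, 1)| := abs_add_three _ _ _
    _ ≤ M + (M + 2*M^2) * (|p.1 - x0.1| + |p.2 - x0.2|) := by
        nlinarith [abs_nonneg (p.1 - x0.1), abs_nonneg (p.2 - x0.2)]

lemma P1_taylor (hε : ε ≠ 0) (x : ℝ × ℝ) :
    P1 u Du ε x0 x = u x0 + Du x0 (x - x0) := by
  have hx : x - x0 = (x.1 - x0.1) • ((1 : ℝ), (0 : ℝ)) + (x.2 - x0.2) • ((0 : ℝ), (1 : ℝ)) := by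
    ext <;> simp
  rw [P1_eq hε, hx, map_add, map_smul, map_smul]
  simp only [smul_eq_mul]
  ring

lemma gronwallBound_le_exp {K εG : ℝ} (hK : 0 ≤ K) (hε : 0 ≤ εG) :
    gronwallBound 0 K εG 1 ≤ εG * Real.exp K := by
  unfold gronwallBound
  split_ifs with h
  · subst h; simp [Real.exp_zero]
  · have hKpos : 0 < K := lt_of_le_of_ne hK (Ne.symm h)
    have hmul : Real.exp (-K) * Real.exp K = 1 := by rw [← Real.exp_add]; simp
    have hexp : (-K) + 1 ≤ Real.exp (-K) := Real.add_one_le_exp _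
    rw [zero_mul, zero_add, mul_one, div_mul_eq_mul_div, div_le_iff₀ hKpos]
    have h3 : (-K + 1) * Real.exp K ≤ Real.exp (-K) * Real.exp K :=
      mul_le_mul_of_nonneg_right hexp (le_of_lt (Real.exp_pos K))
    rw [hmul] at h3
    nlinarith [Real.exp_pos K]

end aux

set_option maxHeartbeats 2000000 in
theorem frozen_taylor_estimate (Ω : Set (ℝ × ℝ)) (hΩ : IsOpen Ω)
    (α : ℝ) (hα : α ∈ Set.Ioo (0 : ℝ) 1)
    (u : ℝ × ℝ → ℝ) (Du : ℝ × ℝ → (ℝ × ℝ) →L[ℝ] ℝ) (M : ℝ)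
    (hd : ∀ x ∈ Ω, HasFDerivAt u (Du x) x)
    (hbd : ∀ x ∈ Ω, |u x| + ‖Du x‖ ≤ M)
    (hH : ∀ x ∈ Ω, ∀ y ∈ Ω, ‖Du x - Du y‖ ≤ M * dist x y ^ α)
    (x0 : ℝ × ℝ) (hx0 : x0 ∈ Ω) :
    ∃ ε0 > (0 : ℝ), ∃ C > (0 : ℝ), ∃ U ∈ nhds x0,
      ∀ ε : ℝ, 0 < ε → ε < ε0 → ∀ x ∈ U ∩ Ω,
        |u x - P1 u Du ε x0 x| ≤
          C * (ctrlDist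
              (fun p => (1, P1 u Du ε x0 (p.1, p.2.1) + p.2.2 ^ 2, 0))
              (fun _ => (0, ε, 0)) (fun _ => (0, 0, 1))
              (x.1, x.2, 0) (x0.1, x0.2, 0)) ^ (1 + α) := by
  obtain ⟨hα0, hα1⟩ := hα
  have hM0 : 0 ≤ M := le_trans (by positivity) (hbd x0 hx0)
  set K₁ : ℝ := M + 2*M^2 with hK₁def
  have hK₁0 : 0 ≤ K₁ := by nlinarith
  set C₂ : ℝ := (M + 3*K₁ + 2) * Real.exp K₁ with hC₂def
  have hC₂0 : 0 < C₂ := mul_pos (by nlinarith) (Real.exp_pos _)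
  obtain ⟨r, hr0, hrΩ⟩ := Metric.isOpen_iff.mp hΩ x0 hx0
  set r' : ℝ := min r 1 with hr'def
  have hr'0 : 0 < r' := lt_min hr0 one_pos
  refine ⟨1, one_pos, (M+1)*(1+C₂)^2, by positivity, Metric.ball x0 r',
    Metric.ball_mem_nhds _ hr'0, ?_⟩
  intro ε hε0 hε1 x hx
  obtain ⟨hxU, hxΩ⟩ := hx
  have hεne : ε ≠ 0 := ne_of_gt hε0
  have hxd : dist x x0 < r' := Metric.mem_ball.mp hxU
  have hxd1 : ‖x - x0‖ ≤ 1 := by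
    rw [← dist_eq_norm]
    exact le_trans hxd.le (min_le_right r 1)
  have hbdx0 := hbd x0 hx0
  set V1 : ℝ × ℝ × ℝ → ℝ × ℝ × ℝ :=
    fun p => (1, P1 u Du ε x0 (p.1, p.2.1) + p.2.2 ^ 2, 0) with hV1
  set S : Set ℝ := {L : ℝ | 0 ≤ L ∧ ∃ γ : ℝ → ℝ × ℝ × ℝ, ∃ a : ℝ → ℝ × ℝ × ℝ,
    γ 0 = (x.1, x.2, 0) ∧ γ 1 = (x0.1, x0.2, 0) ∧
    ∀ t ∈ Set.Icc (0 : ℝ) 1,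
      HasDerivAt γ ((a t).1 • V1 (γ t) + (a t).2.1 • ((0 : ℝ), ε, (0 : ℝ))
        + (a t).2.2 • ((0 : ℝ), (0 : ℝ), (1 : ℝ))) t ∧
      ‖a t‖ ≤ L} with hSdef
  have hDeq : ctrlDist V1 (fun _ => (0, ε, 0)) (fun _ => (0, 0, 1))
      (x.1, x.2, 0) (x0.1, x0.2, 0) = sInf S := rfl
  rw [hDeq]
  -- lower bound on admissible L
  have hS_lb : ∀ L ∈ S, ‖x - x0‖ ≤ (1 + C₂) * L := by
    rintro L ⟨hL0, γ, a, hγ0, hγ1, hmem⟩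
    rcases le_or_gt L 1 with hL1 | hL1
    · -- small L: use Gronwall
      have ha1 : ∀ t ∈ Set.Icc (0:ℝ) 1, |(a t).1| ≤ L := fun t ht =>
        le_trans (norm_fst_le (a t)) (hmem t ht).2
      have ha2 : ∀ t ∈ Set.Icc (0:ℝ) 1, |(a t).2.1| ≤ L := fun t ht =>
        le_trans (le_trans (norm_fst_le ((a t).2)) (norm_snd_le (a t))) (hmem t ht).2
      have ha3 : ∀ t ∈ Set.Icc (0:ℝ) 1, |(a t).2.2| ≤ L := fun t ht =>
        le_trans (le_trans (norm_snd_le ((a t).2)) (norm_snd_le (a t))) (hmem t ht).2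
      have hd1 : ∀ t ∈ Set.Icc (0:ℝ) 1, HasDerivAt (fun s => (γ s).1) ((a t).1) t := by
        intro t ht
        have h := ((hmem t ht).1.hasFDerivAt.fst).hasDerivAt
        simpa [hV1] using h
      have hd2 : ∀ t ∈ Set.Icc (0:ℝ) 1, HasDerivAt (fun s => (γ s).2.1)
          ((a t).1 * (P1 u Du ε x0 ((γ t).1, (γ t).2.1) + ((γ t).2.2)^2) + (a t).2.1 * ε) t := by
        intro t ht
        have h := (((hmem t ht).1.hasFDerivAt.snd).fst).hasDerivAt
        simpa [hV1] using h
      have hd3 : ∀ t ∈ Set.Icc (0:ℝ) 1, HasDerivAt (fun s => (γ s).2.2) ((a t).2.2) t := by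
        intro t ht
        have h := (((hmem t ht).1.hasFDerivAt.snd).snd).hasDerivAt
        simpa [hV1] using h
      have hb1 : ∀ t ∈ Set.Icc (0:ℝ) 1, |(γ t).1 - (γ 0).1| ≤ L * t := by
        intro t ht
        have := norm_image_sub_le_of_norm_deriv_le_segment'
          (f := fun s => (γ s).1) (f' := fun s => (a s).1) (C := L)
          (fun s hs => (hd1 s hs).hasDerivWithinAt)
          (fun s hs => by
            rw [Real.norm_eq_abs]; exact ha1 s (Set.Ico_subset_Icc_self hs)) t ht
        simpa using this
      have hb3 : ∀ t ∈ Set.Icc (0:ℝ) 1, |(γ t).2.2| ≤ L := by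
        intro t ht
        have := norm_image_sub_le_of_norm_deriv_le_segment'
          (f := fun s => (γ s).2.2) (f' := fun s => (a s).2.2) (C := L)
          (fun s hs => (hd3 s hs).hasDerivWithinAt)
          (fun s hs => by
            rw [Real.norm_eq_abs]; exact ha3 s (Set.Ico_subset_Icc_self hs)) t ht
        have h0 : (γ 0).2.2 = 0 := by rw [hγ0]
        simp only [h0, sub_zero, Real.norm_eq_abs] at this
        nlinarith [ht.1, ht.2]
      -- Gronwall for the second coordinate
      set f : ℝ → ℝ := fun t => (γ t).2.1 - (γ 0).2.1 with hfdef
      set f' : ℝ → ℝ := fun t =>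
        (a t).1 * (P1 u Du ε x0 ((γ t).1, (γ t).2.1) + ((γ t).2.2)^2) + (a t).2.1 * ε with hf'def
      set εG : ℝ := L * (M + K₁*(L+2) + L^2 + 1) with hεGdef
      have hεG0 : 0 ≤ εG := by
        apply mul_nonneg hL0
        nlinarith [mul_nonneg hK₁0 (show (0:ℝ) ≤ L + 2 by linarith), sq_nonneg L]
      have hfc : ContinuousOn f (Set.Icc 0 1) := fun t ht =>
        (((hd2 t ht).continuousAt).sub continuousAt_const).continuousWithinAt
      have hfderiv : ∀ t ∈ Set.Ico (0:ℝ) 1, HasDerivWithinAt f (f' t) (Set.Ici t) t :=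
        fun t ht => ((hd2 t (Set.Ico_subset_Icc_self ht)).sub_const _).hasDerivWithinAt
      have hbound : ∀ t ∈ Set.Ico (0:ℝ) 1, ‖f' t‖ ≤ (L * K₁) * ‖f t‖ + εG := by
        intro t ht
        have ht' : t ∈ Set.Icc (0:ℝ) 1 := Set.Ico_subset_Icc_self ht
        have hP := P1_abs_le (M := M) hεne hbdx0 ((γ t).1, (γ t).2.1)
        rw [← hK₁def] at hP
        have h11 : |(γ t).1 - x0.1| ≤ L + 1 := by
          have e0 : (γ 0).1 = x.1 := by rw [hγ0]
          have e1 := hb1 t ht'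
          rw [e0] at e1
          have e2 : |x.1 - x0.1| ≤ 1 := by
            have : |(x - x0).1| ≤ ‖x - x0‖ := norm_fst_le (x - x0)
            simpa using le_trans this hxd1
          calc |(γ t).1 - x0.1| ≤ |(γ t).1 - x.1| + |x.1 - x0.1| := abs_sub_le _ _ _
            _ ≤ L + 1 := by nlinarith [ht'.1, ht'.2]
        have h21 : |(γ t).2.1 - x0.2| ≤ |f t| + 1 := by
          have e0 : (γ 0).2.1 = x.2 := by rw [hγ0]
          have e2 : |x.2 - x0.2| ≤ 1 := by
            have : |(x - x0).2| ≤ ‖x - x0‖ := norm_snd_le (x - x0)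
            simpa using le_trans this hxd1
          calc |(γ t).2.1 - x0.2| ≤ |(γ t).2.1 - x.2| + |x.2 - x0.2| := abs_sub_le _ _ _
            _ ≤ |f t| + 1 := by
              have : (γ t).2.1 - x.2 = f t := by rw [hfdef]; simp [e0]
              rw [this]; linarith
        have h3 : ((γ t).2.2)^2 ≤ L^2 := by
          have := hb3 t ht'
          nlinarith [abs_nonneg ((γ t).2.2), sq_abs ((γ t).2.2)]
        have hinner : |P1 u Du ε x0 ((γ t).1, (γ t).2.1) + ((γ t).2.2)^2|
            ≤ M + K₁*(L+2) + K₁*|f t| + L^2 := by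
          calc |P1 u Du ε x0 ((γ t).1, (γ t).2.1) + ((γ t).2.2)^2|
              ≤ |P1 u Du ε x0 ((γ t).1, (γ t).2.1)| + ((γ t).2.2)^2 := by
                have habs := abs_add_le (P1 u Du ε x0 ((γ t).1, (γ t).2.1)) (((γ t).2.2)^2)
                rwa [abs_of_nonneg (sq_nonneg ((γ t).2.2))] at habs
            _ ≤ M + K₁*(L+2) + K₁*|f t| + L^2 := by nlinarith [abs_nonneg (f t)]
        have t1 : |(a t).1| * |P1 u Du ε x0 ((γ t).1, (γ t).2.1) + ((γ t).2.2)^2|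
            ≤ L * (M + K₁*(L+2) + K₁*|f t| + L^2) :=
          mul_le_mul (ha1 t ht') hinner (abs_nonneg _) hL0
        have t2 : |(a t).2.1| * |ε| ≤ L * 1 := by
          rw [abs_of_pos hε0]
          exact mul_le_mul (ha2 t ht') hε1.le hε0.le hL0
        rw [Real.norm_eq_abs, Real.norm_eq_abs]
        calc |f' t| ≤ |(a t).1 * (P1 u Du ε x0 ((γ t).1, (γ t).2.1) + ((γ t).2.2)^2)|
              + |(a t).2.1 * ε| := abs_add_le _ _
          _ ≤ L * (M + K₁*(L+2) + K₁*|f t| + L^2) + L * 1 := by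
              rw [abs_mul, abs_mul]; exact add_le_add t1 t2
          _ = (L * K₁) * |f t| + εG := by rw [hεGdef]; ring
      have hf0 : ‖f 0‖ ≤ 0 := by simp [hfdef]
      have hgron := norm_le_gronwallBound_of_norm_deriv_right_le hfc hfderiv hf0 hbound 1
        (by norm_num : (1:ℝ) ∈ Set.Icc (0:ℝ) 1)
      rw [sub_zero] at hgron
      have hgb : gronwallBound 0 (L*K₁) εG 1 ≤ εG * Real.exp (L*K₁) :=
        gronwallBound_le_exp (mul_nonneg hL0 hK₁0) hεG0
      have hfin : ‖f 1‖ ≤ L * C₂ := by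
        have h3 : εG * Real.exp (L*K₁) ≤ (L*(M + 3*K₁ + 2)) * Real.exp K₁ := by
          apply mul_le_mul
          · rw [hεGdef]; nlinarith [mul_nonneg hL0 hK₁0, sq_nonneg L]
          · exact Real.exp_le_exp.mpr (by nlinarith)
          · exact (Real.exp_pos _).le
          · nlinarith
        calc ‖f 1‖ ≤ gronwallBound 0 (L*K₁) εG 1 := hgron
          _ ≤ εG * Real.exp (L*K₁) := hgb
          _ ≤ (L*(M + 3*K₁ + 2)) * Real.exp K₁ := h3
          _ = L * C₂ := by rw [hC₂def]; ring
      have e1 : |x0.1 - x.1| ≤ L := by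
        have := hb1 1 (by norm_num)
        rw [hγ0, hγ1] at this
        simpa using this
      have e2 : |x0.2 - x.2| ≤ L * C₂ := by
        have : f 1 = x0.2 - x.2 := by rw [hfdef]; simp [hγ0, hγ1]
        rw [← this]
        simpa [Real.norm_eq_abs] using hfin
      have hnorm : ‖x - x0‖ = max |x.1 - x0.1| |x.2 - x0.2| := by
        rw [Prod.norm_def]
        simp [Real.norm_eq_abs]
      rw [hnorm]
      apply max_le
      · rw [abs_sub_comm]; nlinarith [mul_nonneg hL0 hC₂0.le]
      · rw [abs_sub_comm]; nlinarith [hL0]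
    · -- large L
      nlinarith [mul_nonneg hC₂0.le (show (0:ℝ) ≤ L by linarith)]
  -- nonemptiness: straight-line curve
  have hS_ne : S.Nonempty := by
    set d1 : ℝ := x0.1 - x.1 with hd1def
    set d2 : ℝ := x0.2 - x.2 with hd2def
    have hd1le : |d1| ≤ 1 := by
      have : |(x0 - x).1| ≤ ‖x0 - x‖ := norm_fst_le (x0 - x)
      rw [norm_sub_rev] at this
      simpa [hd1def] using le_trans this hxd1
    have hd2le : |d2| ≤ 1 := by
      have : |(x0 - x).2| ≤ ‖x0 - x‖ := norm_snd_le (x0 - x)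
      rw [norm_sub_rev] at this
      simpa [hd2def] using le_trans this hxd1
    set Pb : ℝ := M + K₁ * 2 with hPbdef
    set L0 : ℝ := |d1| + (|d2| + |d1| * Pb) / ε with hL0def
    have hPb0 : 0 ≤ Pb := by nlinarith
    have hL00 : 0 ≤ L0 := by positivity
    refine ⟨L0, hL00, fun t => (x.1 + t*d1, x.2 + t*d2, 0),
      fun t => (d1, (d2 - d1 * P1 u Du ε x0 (x.1 + t*d1, x.2 + t*d2))/ε, 0), ?_, ?_, ?_⟩
    · norm_num
    · show ((x.1 + 1*d1 : ℝ), (x.2 + 1*d2 : ℝ), (0:ℝ)) = (x0.1, x0.2, 0)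
      rw [hd1def, hd2def]; norm_num
    · intro t ht
      constructor
      · have h1 : HasDerivAt (fun t : ℝ => x.1 + t*d1) d1 t := by
          simpa using ((hasDerivAt_id t).mul_const d1).const_add x.1
        have h2 : HasDerivAt (fun t : ℝ => x.2 + t*d2) d2 t := by
          simpa using ((hasDerivAt_id t).mul_const d2).const_add x.2
        have h3 : HasDerivAt (fun _ : ℝ => (0:ℝ)) 0 t := hasDerivAt_const t 0
        have hder := h1.prodMk (h2.prodMk h3)
        convert hder using 1
        rw [hV1]
        ext
        · simp
        · show _ = d2
          simp only [Prod.smul_fst, Prod.smul_snd, Prod.fst_add, Prod.snd_add, smul_eq_mul]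
          field_simp; ring
        · simp
      · have hP : |P1 u Du ε x0 (x.1 + t*d1, x.2 + t*d2)|
            ≤ M + K₁ * (|x.1 + t*d1 - x0.1| + |x.2 + t*d2 - x0.2|) := by
          have h := P1_abs_le (M := M) hεne hbdx0 (x.1 + t*d1, x.2 + t*d2)
          rw [← hK₁def] at h
          exact h
        have hp1 : |x.1 + t*d1 - x0.1| ≤ 1 := by
          have e : x.1 + t*d1 - x0.1 = (t-1)*d1 := by rw [hd1def]; ring
          rw [e, abs_mul]
          have h1t : |t - 1| ≤ 1 := by
            rw [abs_le]; constructor <;> linarith [ht.1, ht.2]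
          nlinarith [abs_nonneg (t-1), abs_nonneg d1]
        have hp2 : |x.2 + t*d2 - x0.2| ≤ 1 := by
          have e : x.2 + t*d2 - x0.2 = (t-1)*d2 := by rw [hd2def]; ring
          rw [e, abs_mul]
          have h1t : |t - 1| ≤ 1 := by
            rw [abs_le]; constructor <;> linarith [ht.1, ht.2]
          nlinarith [abs_nonneg (t-1), abs_nonneg d2]
        have hPle : |P1 u Du ε x0 (x.1 + t*d1, x.2 + t*d2)| ≤ Pb := by
          rw [hPbdef]
          nlinarith [hP, hp1, hp2, hK₁0]
        have hq : |(d2 - d1 * P1 u Du ε x0 (x.1 + t*d1, x.2 + t*d2))/ε|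
            ≤ (|d2| + |d1| * Pb)/ε := by
          rw [abs_div, abs_of_pos hε0]
          have hnum : |d2 - d1 * P1 u Du ε x0 (x.1 + t*d1, x.2 + t*d2)|
              ≤ |d2| + |d1| * Pb := by
            calc |d2 - d1 * P1 u Du ε x0 (x.1 + t*d1, x.2 + t*d2)|
                ≤ |d2| + |d1 * P1 u Du ε x0 (x.1 + t*d1, x.2 + t*d2)| := abs_sub _ _
              _ ≤ |d2| + |d1| * Pb := by
                  rw [abs_mul]
                  exact add_le_add_right (mul_le_mul_of_nonneg_left hPle (abs_nonneg d1)) _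
          gcongr
        have h0q : 0 ≤ (|d2| + |d1| * Pb)/ε := by positivity
        show max ‖d1‖ (max ‖(d2 - d1 * P1 u Du ε x0 (x.1 + t*d1, x.2 + t*d2))/ε‖ ‖(0:ℝ)‖) ≤ L0
        apply max_le
        · rw [Real.norm_eq_abs, hL0def]
          linarith
        · apply max_le
          · rw [Real.norm_eq_abs, hL0def]
            linarith [hq, abs_nonneg d1]
          · rw [norm_zero]
            exact hL00
  -- conclusion
  have hD0 : (0:ℝ) ≤ sInf S := le_csInf hS_ne fun L hL => hL.1
  have hpos : (0:ℝ) < 1 + C₂ := by linarith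
  have hDlb : ‖x - x0‖ / (1 + C₂) ≤ sInf S :=
    le_csInf hS_ne fun L hL => by
      rw [div_le_iff₀ hpos]
      calc ‖x - x0‖ ≤ (1 + C₂) * L := hS_lb L hL
        _ = L * (1 + C₂) := mul_comm _ _
  have h1 : ‖x - x0‖ ≤ (1 + C₂) * sInf S := by
    rw [div_le_iff₀ hpos] at hDlb
    calc ‖x - x0‖ ≤ sInf S * (1 + C₂) := hDlb
      _ = (1 + C₂) * sInf S := mul_comm _ _
  rcases eq_or_ne x x0 with hxx | hxx
  · have hLHS : |u x - P1 u Du ε x0 x| = 0 := by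
      rw [hxx, P1_eq hεne]
      simp
    rw [hLHS]
    exact mul_nonneg (by positivity) (Real.rpow_nonneg hD0 _)
  · have hΔpos : 0 < ‖x - x0‖ := by
      rw [norm_pos_iff]; exact sub_ne_zero_of_ne hxx
    have hseg : segment ℝ x0 x ⊆ Metric.closedBall x0 (dist x x0) := by
      apply (convex_closedBall x0 (dist x x0)).segment_subset
      · simp [Metric.mem_closedBall, dist_nonneg]
      · simp [Metric.mem_closedBall]
    have hsegΩ : segment ℝ x0 x ⊆ Ω := by
      intro y hy
      apply hrΩ
      have h := Metric.mem_closedBall.mp (hseg hy)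
      exact Metric.mem_ball.mpr (lt_of_le_of_lt h (lt_of_lt_of_le hxd (min_le_left r 1)))
    have hTay := Convex.norm_image_sub_le_of_norm_hasFDerivWithin_le'
      (f := u) (f' := Du) (φ := Du x0) (C := M * ‖x - x0‖ ^ α) (s := segment ℝ x0 x)
      (fun y hy => (hd y (hsegΩ hy)).hasFDerivWithinAt)
      (fun y hy => by
        have h := hH y (hsegΩ hy) x0 hx0
        have hle : dist y x0 ≤ dist x x0 := Metric.mem_closedBall.mp (hseg hy)
        calc ‖Du y - Du x0‖ ≤ M * dist y x0 ^ α := h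
          _ ≤ M * dist x x0 ^ α :=
            mul_le_mul_of_nonneg_left (Real.rpow_le_rpow dist_nonneg hle hα0.le) hM0
          _ = M * ‖x - x0‖ ^ α := by rw [dist_eq_norm])
      (convex_segment x0 x) (left_mem_segment ℝ x0 x) (right_mem_segment ℝ x0 x)
    have hT : |u x - P1 u Du ε x0 x| ≤ M * ‖x - x0‖ ^ (1+α) := by
      rw [P1_taylor hεne]
      have e : u x - (u x0 + Du x0 (x - x0)) = u x - u x0 - Du x0 (x - x0) := by ring
      rw [e, ← Real.norm_eq_abs]
      calc ‖u x - u x0 - Du x0 (x - x0)‖ ≤ M * ‖x - x0‖^α * ‖x - x0‖ := hTay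
        _ = M * ‖x - x0‖^(1+α) := by
          rw [Real.rpow_add hΔpos, Real.rpow_one]; ring
    have h2 : ‖x - x0‖^(1+α) ≤ ((1+C₂) * sInf S)^(1+α) :=
      Real.rpow_le_rpow (norm_nonneg _) h1 (by linarith)
    have h3 : ((1+C₂) * sInf S)^(1+α) = (1+C₂)^(1+α) * (sInf S)^(1+α) :=
      Real.mul_rpow (by linarith) hD0
    have h4 : ((1:ℝ)+C₂)^(1+α) ≤ (1+C₂)^(2:ℝ) :=
      Real.rpow_le_rpow_of_exponent_le (by linarith) (by linarith)
    have h5 : ((1:ℝ)+C₂)^(2:ℝ) = (1+C₂)^(2:ℕ) := by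
      rw [show ((2:ℝ) = ((2:ℕ):ℝ)) by norm_num, Real.rpow_natCast]
    have h6 : 0 ≤ (sInf S)^(1+α) := Real.rpow_nonneg hD0 _
    calc |u x - P1 u Du ε x0 x| ≤ M * ‖x - x0‖^(1+α) := hT
      _ ≤ M * ((1+C₂)^(1+α) * (sInf S)^(1+α)) := by
          rw [← h3]; exact mul_le_mul_of_nonneg_left h2 hM0
      _ ≤ (M+1) * ((1+C₂)^2 * (sInf S)^(1+α)) := by
          have hA : ((1:ℝ)+C₂)^(1+α) * (sInf S)^(1+α) ≤ (1+C₂)^2 * (sInf S)^(1+α) := by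
            apply mul_le_mul_of_nonneg_right _ h6
            calc ((1:ℝ)+C₂)^(1+α) ≤ (1+C₂)^(2:ℝ) := h4
              _ = (1+C₂)^(2:ℕ) := h5
          have hB : 0 ≤ ((1:ℝ)+C₂)^2 * (sInf S)^(1+α) :=
            mul_nonneg (by positivity) h6
          nlinarith [mul_le_mul_of_nonneg_left hA hM0]
      _ = (M+1) * (1+C₂)^2 * (sInf S)^(1+α) := by ring
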